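/- In the frequency-domain model of an LCMT, assume additionally that h m ω ≠ 0 for every node m ≠ r and every ω ∈ ℝ, and that the coherence functions ω ↦ C(X i ω, X j ω) are measurable for all pairs of nodes i, j. Let T be the tree on V with edge set { {j, par j} : j ≠ r }. Then T is the unique minimum spanning tree for the coherence distance d: for every tree T' on V (connected acyclic simple graph on the vertex set V) with T' ≠ T, the sum of d over the edges of T' is strictly greater than the sum of d over the edges of T. -/

import Mathlib

open scoped InnerProductSpace

/-- The coherence of two vectors of a complex inner product space
(inner product conjugate-linear in the first argument):
`C(u, v) = ‖⟪u, v⟫‖² / (‖u‖² · ‖v‖²)`. -/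
noncomputable def coherence {H : Type*} [NormedAddCommGroup H]
    [InnerProductSpace ℂ H] (u v : H) : ℝ :=
  ‖⟪u, v⟫_ℂ‖ ^ 2 / (‖u‖ ^ 2 * ‖v‖ ^ 2)

/-- The coherence-based distance between two frequency-indexed families of
vectors: `d(f, g) = ( (1/(2π)) ∫_{-π}^{π} (1 − C(f ω, g ω)) dω )^{1/2}`. -/
noncomputable def cohDist {H : Type*} [NormedAddCommGroup H]
    [InnerProductSpace ℂ H] (f g : ℝ → H) : ℝ :=
  Real.sqrt ((1 / (2 * Real.pi)) *
    ∫ ω in (-Real.pi)..Real.pi, (1 - coherence (f ω) (g ω)))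

/-- The coherence-based distance is symmetric, so it induces a well-defined
weight on undirected edges. -/
theorem cohDist_symm {H : Type*} [NormedAddCommGroup H]
    [InnerProductSpace ℂ H] (f g : ℝ → H) : cohDist f g = cohDist g f := by
  unfold cohDist coherence
  congr 1
  congr 1
  apply intervalIntegral.integral_congr
  intro ω _
  simp only []
  rw [norm_inner_symm (𝕜 := ℂ) (f ω) (g ω), mul_comm]

/-- The total weight of (the edges of) a simple graph on a finite vertex type,
with respect to a symmetric weight function `w`. -/
noncomputable def graphWeight {V : Type*} [Fintype V]
    (w : V → V → ℝ) (hw : ∀ a b, w a b = w b a) (G : SimpleGraph V) : ℝ :=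
  ∑ e ∈ (Set.toFinite G.edgeSet).toFinset, Sym2.lift ⟨w, hw⟩ e

namespace LCMTaux

open SimpleGraph

variable {V : Type*}

/-- Walk decomposition under edge deletion. -/
lemma reach_deleteEdges {G : SimpleGraph V} {x y u v : V} (p : G.Walk u v) :
    (G.deleteEdges {s(x,y)}).Reachable u v ∨
    ((G.deleteEdges {s(x,y)}).Reachable u x ∧ (G.deleteEdges {s(x,y)}).Reachable y v) ∨
    ((G.deleteEdges {s(x,y)}).Reachable u y ∧ (G.deleteEdges {s(x,y)}).Reachable x v) := by
  induction p with
  | nil => exact Or.inl (Reachable.refl _)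
  | @cons u m v hadj q ih =>
    by_cases he : s(u, m) = s(x, y)
    · rw [Sym2.eq_iff] at he
      rcases he with ⟨rfl, rfl⟩ | ⟨rfl, rfl⟩
      · rcases ih with h | ⟨h1, h2⟩ | ⟨h1, h2⟩
        · exact Or.inr (Or.inl ⟨Reachable.refl _, h⟩)
        · exact Or.inl (h1.symm.trans h2)
        · exact Or.inl h2
      · rcases ih with h | ⟨h1, h2⟩ | ⟨h1, h2⟩
        · exact Or.inr (Or.inr ⟨Reachable.refl _, h⟩)
        · exact Or.inl h2
        · exact Or.inl (h1.symm.trans h2)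
    · have hadj' : (G.deleteEdges {s(x,y)}).Adj u m := by
        rw [deleteEdges_adj]
        exact ⟨hadj, by simpa using he⟩
      rcases ih with h | ⟨h1, h2⟩ | ⟨h1, h2⟩
      · exact Or.inl (hadj'.reachable.trans h)
      · exact Or.inr (Or.inl ⟨hadj'.reachable.trans h1, h2⟩)
      · exact Or.inr (Or.inr ⟨hadj'.reachable.trans h1, h2⟩)

lemma reach_or_of_reachable {G : SimpleGraph V} {x y u v : V} (hr : G.Reachable u v) :
    (G.deleteEdges {s(x,y)}).Reachable u v ∨
    ((G.deleteEdges {s(x,y)}).Reachable u x ∧ (G.deleteEdges {s(x,y)}).Reachable y v) ∨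
    ((G.deleteEdges {s(x,y)}).Reachable u y ∧ (G.deleteEdges {s(x,y)}).Reachable x v) := by
  obtain ⟨p⟩ := hr
  exact reach_deleteEdges p

/-- From an unreachable pair joined by a walk, extract a broken edge. -/
lemma exists_broken_edge {G G' : SimpleGraph V} {u v : V} (p : G.Walk u v)
    (hnr : ¬ G'.Reachable u v) :
    ∃ a b, s(a,b) ∈ p.edges ∧ ¬ G'.Reachable a b := by
  induction p with
  | nil => exact absurd (Reachable.refl _) hnr
  | @cons u m v hadj q ih =>
    by_cases hr : G'.Reachable m v
    · refine ⟨u, m, by simp, fun hum => hnr (hum.trans hr)⟩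
    · obtain ⟨a, b, hmem, hab⟩ := ih hr
      exact ⟨a, b, by simp [hmem], hab⟩

/-- Adding an edge between unreachable vertices of an acyclic graph keeps it acyclic. -/
lemma isAcyclic_sup_edge {G : SimpleGraph V} (hG : G.IsAcyclic) {a b : V}
    (hnr : ¬ G.Reachable a b) :
    (G ⊔ fromEdgeSet {s(a,b)}).IsAcyclic := by
  have hle : ∀ s : Set (Sym2 V), s(a,b) ∈ s →
      (G ⊔ fromEdgeSet {s(a,b)}).deleteEdges s ≤ G.deleteEdges s := by
    intro s hs x y hxy
    rw [deleteEdges_adj] at hxy ⊢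
    rcases hxy with ⟨hxy1 | hxy1, hxy2⟩
    · exact ⟨hxy1, hxy2⟩
    · rw [fromEdgeSet_adj _] at hxy1
      exact absurd (hxy1.1.symm ▸ hs) (hxy1.1 ▸ hxy2)
  rw [isAcyclic_iff_forall_adj_isBridge]
  intro u v huv
  rcases huv with huv | huv
  · skip
    intro hr
    have hb : ¬ (G.deleteEdges {s(u,v)}).Reachable u v :=
      ((isAcyclic_iff_forall_adj_isBridge.mp hG) huv)
    have hne : s(u, v) ≠ s(a, b) := by
      intro hEq
      exact hnr ((mem_edgeSet _).mp (hEq ▸ ((mem_edgeSet _).mpr huv))).reachable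
    have hr' : ((G ⊔ fromEdgeSet {s(a,b)}).deleteEdges {s(u,v)}).Reachable u v := hr
    have hmono : ((G ⊔ fromEdgeSet {s(a,b)}).deleteEdges {s(u,v)}).deleteEdges {s(a,b)} ≤
        G.deleteEdges {s(u,v)} := by
      intro x y hxy
      rw [deleteEdges_adj, deleteEdges_adj] at hxy
      obtain ⟨⟨hxy1 | hxy1, hxy2⟩, hxy3⟩ := hxy
      · exact deleteEdges_adj.mpr ⟨hxy1, hxy2⟩
      · rw [fromEdgeSet_adj _] at hxy1
        exact absurd (hxy1.1 ▸ rfl) (by simpa using hxy3 : s(x,y) ≠ s(a,b))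
    rcases reach_or_of_reachable (x := a) (y := b) hr' with h | ⟨h1, h2⟩ | ⟨h1, h2⟩
    · exact hb (h.mono hmono)
    · -- u ~ a and b ~ v in G.deleteEdges {s(u,v)} ≤ G ; then a ~ u ~ v ~ b in G
      have hGle : G.deleteEdges {s(u,v)} ≤ G := deleteEdges_le _
      exact hnr (((h1.mono hmono).mono hGle).symm.trans
        (huv.reachable.trans ((h2.mono hmono).mono hGle).symm))
    · have hGle : G.deleteEdges {s(u,v)} ≤ G := deleteEdges_le _
      exact hnr (((h2.mono hmono).mono hGle).trans
        (huv.reachable.symm.trans ((h1.mono hmono).mono hGle)))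
  · rw [fromEdgeSet_adj _] at huv
    obtain ⟨hm, hne⟩ := huv
    skip
    intro hr
    have hr' : ((G ⊔ fromEdgeSet {s(a,b)}).deleteEdges {s(u,v)}).Reachable u v := hr
    have : s(u,v) = s(a,b) := by simpa using hm
    have hmono : (G ⊔ fromEdgeSet {s(a,b)}).deleteEdges {s(u,v)} ≤ G :=
      le_trans (hle {s(u,v)} (by simp [this])) (deleteEdges_le _)
    have hGr : G.Reachable u v := hr'.mono hmono
    rw [Sym2.eq_iff] at this
    rcases this with ⟨rfl, rfl⟩ | ⟨rfl, rfl⟩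
    · exact hnr hGr
    · exact hnr hGr.symm

theorem tree_unique_mst {V : Type*} [Fintype V]
    (w : V → V → ℝ) (hw : ∀ a b, w a b = w b a)
    (T : SimpleGraph V) (hT : T.IsTree)
    (H : ∀ x y a b : V, x ≠ y → T.Adj a b → s(x,y) ≠ s(a,b) →
        ¬(T.deleteEdges {s(a,b)}).Reachable x y → w a b < w x y) :
    ∀ T' : SimpleGraph V, T'.IsTree → T' ≠ T →
      graphWeight w hw T < graphWeight w hw T' := by
  classical
  set EF : SimpleGraph V → Finset (Sym2 V) :=
    fun G => (Set.toFinite G.edgeSet).toFinset with hEF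
  have memEF : ∀ (G : SimpleGraph V) (e : Sym2 V), e ∈ EF G ↔ e ∈ G.edgeSet := by
    intro G e
    rw [hEF]
    exact Set.Finite.mem_toFinset _
  have gw_def : ∀ G : SimpleGraph V, graphWeight w hw G =
      ∑ e ∈ EF G, Sym2.lift ⟨w, hw⟩ e := fun _ => rfl
  have cardEF : ∀ G : SimpleGraph V, G.IsTree → (EF G).card + 1 = Fintype.card V := by
    intro G hG
    have hEq : EF G = G.edgeFinset := by
      ext e
      rw [memEF]
      exact SimpleGraph.mem_edgeFinset.symm
    rw [hEq]
    exact hG.card_edgeFinset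
  have key : ∀ n : ℕ, ∀ T' : SimpleGraph V, T'.IsTree → T' ≠ T →
      (EF T' \ EF T).card ≤ n →
      graphWeight w hw T < graphWeight w hw T' := by
    intro n
    induction n with
    | zero =>
      intro T' hT' hne hcard
      exfalso
      apply hne
      have hsub : EF T' ⊆ EF T :=
        Finset.sdiff_eq_empty_iff_subset.mp (Finset.card_eq_zero.mp (Nat.le_zero.mp hcard))
      have hEq : EF T' = EF T := by
        apply Finset.eq_of_subset_of_card_le hsub
        have h1 := cardEF T hT
        have h2 := cardEF T' hT'
        omega
      apply edgeSet_inj.mp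
      apply Set.ext
      intro e
      rw [← memEF, ← memEF, hEq]
    | succ n ih =>
      intro T' hT' hne hcard
      have hdiff : (EF T' \ EF T).Nonempty := by
        rw [Finset.nonempty_iff_ne_empty]
        intro hempty
        apply hne
        have hsub : EF T' ⊆ EF T := Finset.sdiff_eq_empty_iff_subset.mp hempty
        have hEq : EF T' = EF T := by
          apply Finset.eq_of_subset_of_card_le hsub
          have h1 := cardEF T hT
          have h2 := cardEF T' hT'
          omega
        apply edgeSet_inj.mp
        apply Set.ext
        intro e
        rw [← memEF, ← memEF, hEq]
      obtain ⟨e', he'⟩ := hdiff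
      induction e' using Sym2.ind with
      | _ x y =>
      rw [Finset.mem_sdiff] at he'
      obtain ⟨hmemT', hnmemT⟩ := he'
      have hxyT' : T'.Adj x y := (mem_edgeSet _).mp ((memEF _ _).mp hmemT')
      have hxyT : ¬ T.Adj x y := fun hadj =>
        hnmemT ((memEF _ _).mpr ((mem_edgeSet _).mpr hadj))
      have hxyne : x ≠ y := hxyT'.ne
      have hnr : ¬ (T'.deleteEdges {s(x,y)}).Reachable x y :=
        ((isAcyclic_iff_forall_adj_isBridge.mp hT'.2) hxyT')
      obtain ⟨p0⟩ : T.Reachable x y := hT.isConnected.preconnected x y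
      obtain ⟨a, b, habp, hnab⟩ :=
        exists_broken_edge (G' := T'.deleteEdges {s(x,y)}) (p0.toPath : T.Walk x y) hnr
      have habT : T.Adj a b :=
        (mem_edgeSet _).mp (Walk.edges_subset_edgeSet _ habp)
      have hab : a ≠ b := habT.ne
      have hab_ne_xy : s(x,y) ≠ s(a,b) := by
        intro hEq
        exact hxyT ((mem_edgeSet _).mp (hEq ▸ ((mem_edgeSet _).mpr habT)))
      have habT'n : ¬ T'.Adj a b := by
        intro hadj
        exact hnab ((deleteEdges_adj.mpr
          ⟨hadj, by simpa using (Ne.symm hab_ne_xy)⟩).reachable)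
      have hsep : ¬ (T.deleteEdges {s(a,b)}).Reachable x y := by
        intro hr
        obtain ⟨q⟩ := hr
        have hsub : ∀ e ∈ ((q.toPath : (T.deleteEdges {s(a,b)}).Walk x y)).edges,
            e ∈ T.edgeSet := by
          intro e he
          have hh := Walk.edges_subset_edgeSet _ he
          rw [edgeSet_deleteEdges] at hh
          exact hh.1
        set q1 : T.Walk x y := Walk.transfer _ T hsub with hq1
        have hq1path : q1.IsPath := (q.toPath.2).transfer hsub
        have hPeq : (⟨q1, hq1path⟩ : T.Path x y) = p0.toPath := hT.IsAcyclic.path_unique _ _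
        have hmm : s(a,b) ∈ q1.edges := by
          rw [show q1 = ((⟨q1, hq1path⟩ : T.Path x y) : T.Walk x y) from rfl, hPeq]
          exact habp
        rw [hq1, Walk.edges_transfer] at hmm
        have hh := Walk.edges_subset_edgeSet _ (Walk.edges_toPath_subset q hmm)
        rw [edgeSet_deleteEdges] at hh
        simp at hh
      have hwlt : w a b < w x y := H x y a b hxyne habT hab_ne_xy hsep
      set T₂ : SimpleGraph V := (T'.deleteEdges {s(x,y)}) ⊔ fromEdgeSet {s(a,b)} with hT₂
      have hadj₂ : T₂.Adj a b := Or.inr ((fromEdgeSet_adj _).mpr ⟨rfl, hab⟩)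
      have hle₂ : T'.deleteEdges {s(x,y)} ≤ T₂ := le_sup_left
      have reach2 : ∀ v : V, (T'.deleteEdges {s(x,y)}).Reachable v x ∨
          (T'.deleteEdges {s(x,y)}).Reachable v y := by
        intro v
        rcases reach_or_of_reachable (x := x) (y := y)
          (hT'.isConnected.preconnected v x) with hh | ⟨h1, h2⟩ | ⟨h1, h2⟩
        · exact Or.inl hh
        · exact Or.inl h1
        · exact Or.inr h1
      have hT₂xy : T₂.Reachable x y := by
        rcases reach2 a with ha | ha <;> rcases reach2 b with hb | hb
        · exact absurd (ha.trans hb.symm) hnab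
        · exact ((ha.symm.mono hle₂).trans
            (hadj₂.reachable.trans (hb.mono hle₂)))
        · exact ((hb.symm.mono hle₂).trans
            (hadj₂.symm.reachable.trans (ha.mono hle₂)))
        · exact absurd (ha.trans hb.symm) hnab
      have hT₂conn : T₂.Connected := by
        have hnonempty : Nonempty V := hT'.isConnected.nonempty
        refine ⟨fun u v => ?_⟩
        rcases reach2 u with hu | hu <;> rcases reach2 v with hv | hv
        · exact (hu.mono hle₂).trans (hv.mono hle₂).symm
        · exact (hu.mono hle₂).trans (hT₂xy.trans (hv.mono hle₂).symm)
        · exact (hu.mono hle₂).trans (hT₂xy.symm.trans (hv.mono hle₂).symm)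
        · exact (hu.mono hle₂).trans (hv.mono hle₂).symm
      have hdelacy : (T'.deleteEdges {s(x,y)}).IsAcyclic := by
        intro v c hc
        exact hT'.2 (c.mapLe (deleteEdges_le _)) (hc.mapLe _)
      have hT₂tree : T₂.IsTree := ⟨hT₂conn, isAcyclic_sup_edge hdelacy hnab⟩
      have hT₂E : EF T₂ = insert s(a,b) ((EF T').erase s(x,y)) := by
        ext e
        rw [memEF, Finset.mem_insert, Finset.mem_erase, memEF, hT₂,
          edgeSet_sup, edgeSet_deleteEdges, edgeSet_fromEdgeSet]
        constructor
        · rintro (⟨h1, h2⟩ | ⟨h1, _⟩)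
          · exact Or.inr ⟨by simpa using h2, h1⟩
          · exact Or.inl (by simpa using h1)
        · rintro (rfl | ⟨h1, h2⟩)
          · exact Or.inr ⟨rfl, by simp [Sym2.isDiag_iff_proj_eq, hab]⟩
          · exact Or.inl ⟨h2, by simpa using h1⟩
      have habnotmem : s(a,b) ∉ (EF T').erase s(x,y) := by
        intro hmem
        rw [Finset.mem_erase, memEF, mem_edgeSet] at hmem
        exact habT'n hmem.2
      have hgw₂ : graphWeight w hw T₂ = graphWeight w hw T' - w x y + w a b := by
        rw [gw_def, gw_def, hT₂E, Finset.sum_insert habnotmem,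
          Finset.sum_erase_eq_sub hmemT']
        simp only [Sym2.lift_mk]
        ring
      have hsub₂ : EF T₂ \ EF T ⊆ (EF T' \ EF T).erase s(x,y) := by
        intro e he
        rw [Finset.mem_sdiff] at he
        obtain ⟨he1, he2⟩ := he
        rw [hT₂E, Finset.mem_insert, Finset.mem_erase] at he1
        rcases he1 with rfl | ⟨hne1, hmem1⟩
        · exact absurd ((memEF _ _).mpr ((mem_edgeSet _).mpr habT)) he2
        · exact Finset.mem_erase.mpr ⟨hne1, Finset.mem_sdiff.mpr ⟨hmem1, he2⟩⟩
      have hcard₂ : (EF T₂ \ EF T).card ≤ n := by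
        have h1 := Finset.card_le_card hsub₂
        have h2 : ((EF T' \ EF T).erase s(x,y)).card = (EF T' \ EF T).card - 1 :=
          Finset.card_erase_of_mem (Finset.mem_sdiff.mpr ⟨hmemT', hnmemT⟩)
        have h3 : 1 ≤ (EF T' \ EF T).card :=
          Finset.card_pos.mpr ⟨s(x,y), Finset.mem_sdiff.mpr ⟨hmemT', hnmemT⟩⟩
        omega
      by_cases hT₂T : T₂ = T
      · rw [← hT₂T, hgw₂]
        linarith
      · have hind := ih T₂ hT₂tree hT₂T hcard₂
        rw [hgw₂] at hind
        linarith
  intro T' hT' hne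
  exact key _ T' hT' hne le_rfl



open SimpleGraph

/-! ### Coherence basics -/

section Coh

variable {H : Type*} [NormedAddCommGroup H] [InnerProductSpace ℂ H]

lemma coherence_nonneg (u v : H) : 0 ≤ coherence u v := by
  unfold coherence
  positivity

lemma coherence_comm (u v : H) : coherence u v = coherence v u := by
  unfold coherence
  rw [norm_inner_symm (𝕜 := ℂ) u v, mul_comm]

lemma coherence_le_one (u v : H) : coherence u v ≤ 1 := by
  unfold coherence
  apply div_le_one_of_le₀
  · have hcs := norm_inner_le_norm (𝕜 := ℂ) u v
    calc ‖⟪u, v⟫_ℂ‖ ^ 2 ≤ (‖u‖ * ‖v‖) ^ 2 := by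
          apply pow_le_pow_left₀ (norm_nonneg _) hcs
      _ = ‖u‖ ^ 2 * ‖v‖ ^ 2 := by ring
  · positivity

lemma norm_inner_self_sq (u : H) : ‖⟪u, u⟫_ℂ‖ = ‖u‖ ^ 2 := by
  rw [inner_self_eq_norm_sq_to_K (𝕜 := ℂ), norm_pow, RCLike.norm_ofReal, abs_norm]

lemma coherence_self {u : H} (hu : u ≠ 0) : coherence u u = 1 := by
  unfold coherence
  have hu' : ‖u‖ ≠ 0 := norm_ne_zero_iff.mpr hu
  rw [inner_self_eq_norm_sq_to_K (𝕜 := ℂ), norm_pow, RCLike.norm_ofReal, abs_norm]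
  field_simp
  skip

end Coh

/-! ### Ancestry in a parent map -/

section Anc

variable {V : Type*} {r : V} {par : V → V}

def Anc (par : V → V) (v : V) : Set V := {a | ∃ n, par^[n] v = a}

lemma anc_self (par : V → V) (v : V) : v ∈ Anc par v := ⟨0, rfl⟩

lemma anc_par (par : V → V) (v : V) : par v ∈ Anc par v := ⟨1, rfl⟩

lemma anc_step {a v : V} (ha : a ∈ Anc par (par v)) : a ∈ Anc par v := by
  obtain ⟨n, hn⟩ := ha
  exact ⟨n + 1, by rw [Function.iterate_succ_apply]; exact hn⟩

lemma anc_of_ne {a v : V} (ha : a ∈ Anc par v) (hne : a ≠ v) : a ∈ Anc par (par v) := by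
  obtain ⟨n, hn⟩ := ha
  match n with
  | 0 => simp only [Function.iterate_zero_apply] at hn; exact absurd hn.symm hne
  | Nat.succ m => exact ⟨m, by rw [← Function.iterate_succ_apply]; exact hn⟩

lemma anc_cases {a v : V} : a ∈ Anc par v ↔ a = v ∨ a ∈ Anc par (par v) := by
  constructor
  · intro ha
    by_cases hne : a = v
    · exact Or.inl hne
    · exact Or.inr (anc_of_ne ha hne)
  · rintro (rfl | ha)
    · exact anc_self par a
    · exact anc_step ha

lemma anc_trans {a i k : V} (h1 : a ∈ Anc par i) (h2 : i ∈ Anc par k) : a ∈ Anc par k := by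
  obtain ⟨n, hn⟩ := h1
  obtain ⟨m, hm⟩ := h2
  exact ⟨n + m, by rw [Function.iterate_add_apply, hm, hn]⟩

lemma iterate_root (hroot : par r = r) : ∀ n, par^[n] r = r := by
  intro n
  induction n with
  | zero => rfl
  | succ n ih => rw [Function.iterate_succ_apply, hroot, ih]

lemma anc_root (hroot : par r = r) {a : V} (ha : a ∈ Anc par r) : a = r := by
  obtain ⟨n, hn⟩ := ha
  rw [iterate_root hroot] at hn
  exact hn.symm

lemma root_anc (hreach : ∀ j, ∃ n, par^[n] j = r) (v : V) : r ∈ Anc par v := hreach v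

lemma eq_root_of_iterate_fixed (hroot : par r = r) (hreach : ∀ j, ∃ n, par^[n] j = r)
    {v : V} {k : ℕ} (hk : k ≠ 0) (hv : par^[k] v = v) : v = r := by
  obtain ⟨n, hn⟩ := hreach v
  have hmul : ∀ t, par^[k * t] v = v := by
    intro t
    induction t with
    | zero => rfl
    | succ t ih =>
      rw [Nat.mul_succ, Function.iterate_add_apply, hv, ih]
  have hge : n ≤ k * n := Nat.le_mul_of_pos_left n (Nat.pos_of_ne_zero hk)
  have : par^[k * n] v = r := by
    rw [show k * n = (k * n - n) + n by omega, Function.iterate_add_apply, hn,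
      iterate_root hroot]
  rw [hmul n] at this
  exact this

lemma anc_antisymm (hroot : par r = r) (hreach : ∀ j, ∃ n, par^[n] j = r)
    {a v : V} (h1 : a ∈ Anc par v) (h2 : v ∈ Anc par a) : a = v := by
  obtain ⟨n, hn⟩ := h1
  obtain ⟨m, hm⟩ := h2
  by_cases hn0 : n = 0
  · rw [hn0] at hn; exact hn.symm ▸ rfl
  · have hfix : par^[m + n] v = v := by
      rw [Function.iterate_add_apply, hn, hm]
    have hvr : v = r := eq_root_of_iterate_fixed hroot hreach (by omega) hfix
    subst hvr
    rw [iterate_root hroot] at hn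
    exact hn.symm

lemma not_anc_par_self (hroot : par r = r) (hreach : ∀ j, ∃ n, par^[n] j = r)
    {v : V} (hv : v ≠ r) : v ∉ Anc par (par v) := by
  intro hmem
  obtain ⟨n, hn⟩ := hmem
  rw [← Function.iterate_succ_apply] at hn
  exact hv (eq_root_of_iterate_fixed hroot hreach (Nat.succ_ne_zero n) hn)

lemma anc_root_iff (hroot : par r = r) {a : V} : a ∈ Anc par r ↔ a = r :=
  ⟨anc_root hroot, fun h => h ▸ anc_self par r⟩

lemma par_induction (hroot : par r = r) (hreach : ∀ j, ∃ n, par^[n] j = r)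
    {P : V → Prop} (hr : P r) (hstep : ∀ v, v ≠ r → P (par v) → P v) : ∀ v, P v := by
  have key : ∀ n v, par^[n] v = r → P v := by
    intro n
    induction n with
    | zero => intro v hv; rw [Function.iterate_zero_apply] at hv; exact hv ▸ hr
    | succ n ih =>
      intro v hv
      by_cases hvr : v = r
      · exact hvr ▸ hr
      · exact hstep v hvr (ih (par v) (by rwa [← Function.iterate_succ_apply]))
  intro v
  obtain ⟨n, hn⟩ := hreach v
  exact key n v hn

end Anc

/-! ### Analytic lemmas for the LCMT -/

section LCMT

variable {H : Type*} [NormedAddCommGroup H] [InnerProductSpace ℂ H]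
variable {V : Type*} {r : V} {par : V → V}
variable {h : V → ℝ → ℂ} {ρ : V → ℝ → H} {X : V → ℝ → H}

structure LCMTData (r : V) (par : V → V) (h : V → ℝ → ℂ) (ρ : V → ℝ → H)
    (X : V → ℝ → H) : Prop where
  hroot : par r = r
  hreach : ∀ j, ∃ n, par^[n] j = r
  horth : ∀ (ω : ℝ) (a b : V), a ≠ b → ⟪ρ a ω, ρ b ω⟫_ℂ = 0
  hwp : ∀ (j : V) (ω : ℝ), ρ j ω ≠ 0
  hXr : ∀ ω, X r ω = ρ r ω
  hX : ∀ j, j ≠ r → ∀ ω, X j ω = h j ω • X (par j) ω + ρ j ω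
  hnd : ∀ (m : V) (ω : ℝ), m ≠ r → h m ω ≠ 0

namespace LCMTData

variable (D : LCMTData r par h ρ X)
include D

/-- The noise at a node is orthogonal to every signal of which the node is
not an ancestor. -/
lemma orth_noise : ∀ (ω : ℝ) (m j : V), j ∉ Anc par m → ⟪ρ j ω, X m ω⟫_ℂ = 0 := by
  intro ω
  refine par_induction D.hroot D.hreach ?_ ?_
  · intro j hj
    rw [D.hXr ω]
    exact D.horth ω j r (fun hEq => hj (hEq ▸ anc_self par r))
  · intro v hv ih j hj
    rw [D.hX v hv ω, inner_add_right, inner_smul_right]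
    rw [ih j (fun hmem => hj (anc_step hmem)),
      D.horth ω j v (fun hEq => hj (hEq ▸ anc_self par v))]
    ring

lemma orth_noise' (ω : ℝ) (m j : V) (hj : j ∉ Anc par m) : ⟪X m ω, ρ j ω⟫_ℂ = 0 :=
  inner_eq_zero_symm.mp (D.orth_noise ω m j hj)

lemma norm_X_sq (ω : ℝ) {m : V} (hm : m ≠ r) :
    ‖X m ω‖ ^ 2 = ‖h m ω‖ ^ 2 * ‖X (par m) ω‖ ^ 2 + ‖ρ m ω‖ ^ 2 := by
  rw [D.hX m hm ω]
  have horthog : ⟪h m ω • X (par m) ω, ρ m ω⟫_ℂ = 0 := by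
    rw [inner_smul_left,
      D.orth_noise' ω (par m) m (not_anc_par_self D.hroot D.hreach hm)]
    ring
  have key := norm_add_sq_eq_norm_sq_add_norm_sq_of_inner_eq_zero
    (h m ω • X (par m) ω) (ρ m ω) horthog
  rw [pow_two, key, norm_smul]
  ring

lemma X_ne_zero (ω : ℝ) (m : V) : X m ω ≠ 0 := by
  by_cases hm : m = r
  · rw [hm, D.hXr ω]; exact D.hwp r ω
  · intro h0
    have h1 := D.norm_X_sq ω hm
    rw [h0, norm_zero] at h1
    have h2 : (0:ℝ) < ‖ρ m ω‖ ^ 2 := by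
      have hpos := norm_pos_iff.mpr (D.hwp m ω)
      positivity
    nlinarith [sq_nonneg (‖h m ω‖ * ‖X (par m) ω‖), norm_nonneg (h m ω),
      norm_nonneg (X (par m) ω), mul_pow (‖h m ω‖) (‖X (par m) ω‖) 2]

lemma norm_X_pos (ω : ℝ) (m : V) : 0 < ‖X m ω‖ :=
  norm_pos_iff.mpr (D.X_ne_zero ω m)

lemma inner_X_step (ω : ℝ) {i k : V} (hk : k ≠ r) (hki : k ∉ Anc par i) :
    ⟪X i ω, X k ω⟫_ℂ = h k ω * ⟪X i ω, X (par k) ω⟫_ℂ := by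
  rw [D.hX k hk ω, inner_add_right, inner_smul_right, D.orth_noise' ω i k hki, add_zero]

lemma inner_X_par (ω : ℝ) {k : V} (hk : k ≠ r) :
    ⟪X (par k) ω, X k ω⟫_ℂ = h k ω * ⟪X (par k) ω, X (par k) ω⟫_ℂ := by
  rw [D.hX k hk ω, inner_add_right, inner_smul_right,
    D.orth_noise' ω (par k) k (not_anc_par_self D.hroot D.hreach hk), add_zero]

/-- The coherence of an edge of the tree. -/
lemma edge_coherence (ω : ℝ) {k : V} (hk : k ≠ r) :
    coherence (X (par k) ω) (X k ω) =
      (‖h k ω‖ ^ 2 * ‖X (par k) ω‖ ^ 2) / (‖X k ω‖ ^ 2) := by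
  unfold coherence
  rw [D.inner_X_par ω hk, norm_mul, norm_inner_self_sq]
  have hp := D.norm_X_pos ω (par k)
  have hK := D.norm_X_pos ω k
  rw [div_eq_div_iff (by positivity) (by positivity)]
  ring

lemma edge_coherence_pos (ω : ℝ) {k : V} (hk : k ≠ r) :
    0 < coherence (X (par k) ω) (X k ω) := by
  rw [D.edge_coherence ω hk]
  have h1 := D.hnd k ω hk
  have h2 := D.norm_X_pos ω (par k)
  have h3 := D.norm_X_pos ω k
  have h4 : 0 < ‖h k ω‖ := norm_pos_iff.mpr h1
  positivity

lemma edge_coherence_lt_one (ω : ℝ) {k : V} (hk : k ≠ r) :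
    coherence (X (par k) ω) (X k ω) < 1 := by
  rw [D.edge_coherence ω hk]
  have h3 := D.norm_X_pos ω k
  rw [div_lt_one (by positivity), D.norm_X_sq ω hk]
  have h5 : (0:ℝ) < ‖ρ k ω‖ ^ 2 := by
    have hpos := norm_pos_iff.mpr (D.hwp k ω)
    positivity
  linarith

/-- Main recursion for coherences. -/
lemma coherence_rec (ω : ℝ) {i k : V} (hk : k ≠ r) (hki : k ∉ Anc par i) :
    coherence (X i ω) (X k ω) =
      coherence (X i ω) (X (par k) ω) * coherence (X (par k) ω) (X k ω) := by
  have e1 := D.inner_X_step ω hk hki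
  have e2 := D.inner_X_par ω hk
  unfold coherence
  rw [e1, e2]
  have hhk : (0:ℝ) < ‖h k ω‖ := norm_pos_iff.mpr (D.hnd k ω hk)
  have hpk := D.norm_X_pos ω (par k)
  have hk' := D.norm_X_pos ω k
  have hi := D.norm_X_pos ω i
  rw [norm_mul, norm_mul, norm_inner_self_sq, div_mul_div_comm,
    div_eq_div_iff (by positivity) (by positivity)]
  ring

lemma coherence_lt_one (ω : ℝ) {i k : V} (hik : i ≠ k) :
    coherence (X i ω) (X k ω) < 1 := by
  have hb : ∀ {a b : V}, b ≠ r → b ∉ Anc par a → coherence (X a ω) (X b ω) < 1 := by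
    intro a b hbr hba
    rw [D.coherence_rec ω hbr hba]
    have h1 := coherence_le_one (X a ω) (X (par b) ω)
    have h2 := coherence_nonneg (X a ω) (X (par b) ω)
    have h3 := D.edge_coherence_lt_one ω hbr
    have h4 := D.edge_coherence_pos ω hbr
    nlinarith
  by_cases hanc : k ∈ Anc par i
  · -- then i is a strict descendant of k : peel i instead
    have hir : i ≠ r := by
      intro hEq
      rw [hEq] at hanc
      exact hik (hEq.trans (anc_root D.hroot hanc).symm)
    have hik' : i ∉ Anc par k := fun hmem =>
      hik (anc_antisymm D.hroot D.hreach hmem hanc)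
    rw [coherence_comm]
    exact hb hir hik'
  · have hkr : k ≠ r := by
      intro hEq
      exact hanc (hEq ▸ root_anc D.hreach i)
    exact hb hkr hanc

/-- Through-edge factorization: if `a` is an ancestor of `i` but not of `k`,
the coherence factors through the edge `(a, par a)`. -/
lemma coherence_factor (ω : ℝ) {a : V} (ha : a ≠ r) :
    ∀ i, a ∈ Anc par i → ∀ k, a ∉ Anc par k →
      coherence (X i ω) (X k ω) =
        coherence (X i ω) (X a ω) * coherence (X a ω) (X (par a) ω) *
          coherence (X (par a) ω) (X k ω) := by
  refine par_induction D.hroot D.hreach ?_ ?_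
  · intro hmem
    exact absurd (anc_root D.hroot hmem) ha
  · intro v hv ih hav k hak
    by_cases hva : v = a
    · subst hva
      -- C(v,k) = C(v, par v) * C(par v, k) by the recursion applied backwards
      have h1 : coherence (X k ω) (X v ω) =
          coherence (X k ω) (X (par v) ω) * coherence (X (par v) ω) (X v ω) :=
        D.coherence_rec ω hv hak
      rw [coherence_self (D.X_ne_zero ω v), one_mul]
      rw [coherence_comm (X v ω) (X k ω), h1, coherence_comm (X k ω) (X (par v) ω),
        coherence_comm (X (par v) ω) (X v ω)]
      ring
    · have hapv : a ∈ Anc par (par v) := anc_of_ne hav (fun hEq => hva hEq.symm)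
      have hvk : v ∉ Anc par k := by
        intro hmem
        exact hak (anc_trans hav hmem)
      have hva' : v ∉ Anc par a := fun hmem =>
        hva (anc_antisymm D.hroot D.hreach hmem hav)
      -- peel v
      have h1 : coherence (X k ω) (X v ω) =
          coherence (X k ω) (X (par v) ω) * coherence (X (par v) ω) (X v ω) :=
        D.coherence_rec ω hv hvk
      have h2 : coherence (X a ω) (X v ω) =
          coherence (X a ω) (X (par v) ω) * coherence (X (par v) ω) (X v ω) :=
        D.coherence_rec ω hv hva'
      have h3 := ih hapv k hak
      rw [coherence_comm (X v ω) (X k ω), h1, coherence_comm (X k ω) (X (par v) ω), h3,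
        coherence_comm (X v ω) (X a ω), h2, coherence_comm (X (par v) ω) (X a ω)]
      ring

/-- The pointwise strict comparison of coherences. -/
lemma coherence_lt_edge (ω : ℝ) {a x y : V} (ha : a ≠ r) (hax : a ∈ Anc par x)
    (hay : a ∉ Anc par y) (hstrict : x ≠ a ∨ y ≠ par a) :
    coherence (X x ω) (X y ω) < coherence (X a ω) (X (par a) ω) := by
  have hfac := D.coherence_factor ω ha x hax y hay
  have hpos := D.edge_coherence_pos ω ha
  rw [coherence_comm (X (par a) ω) (X a ω)] at hpos
  have h1 := coherence_le_one (X x ω) (X a ω)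
  have h2 := coherence_nonneg (X x ω) (X a ω)
  have h3 := coherence_le_one (X (par a) ω) (X y ω)
  have h4 := coherence_nonneg (X (par a) ω) (X y ω)
  have hlt : coherence (X x ω) (X a ω) * coherence (X (par a) ω) (X y ω) < 1 := by
    rcases hstrict with hxa | hyp
    · have := D.coherence_lt_one ω hxa
      nlinarith
    · have hypa : (par a) ≠ y := fun hEq => hyp hEq.symm
      have := D.coherence_lt_one ω hypa
      nlinarith
  calc coherence (X x ω) (X y ω)
      = coherence (X a ω) (X (par a) ω) *
        (coherence (X x ω) (X a ω) * coherence (X (par a) ω) (X y ω)) := by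
        rw [hfac]; ring
    _ < coherence (X a ω) (X (par a) ω) * 1 := by
        exact mul_lt_mul_of_pos_left hlt hpos
    _ = coherence (X a ω) (X (par a) ω) := mul_one _

open MeasureTheory intervalIntegral in
lemma cohDist_edge_lt
    (hmeas : ∀ i j : V, Measurable fun ω => coherence (X i ω) (X j ω))
    {a x y : V} (ha : a ≠ r) (hax : a ∈ Anc par x) (hay : a ∉ Anc par y)
    (hstrict : x ≠ a ∨ y ≠ par a) :
    cohDist (X a) (X (par a)) < cohDist (X x) (X y) := by
  have hpi := Real.pi_pos
  have hint : ∀ u v : V, IntervalIntegrable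
      (fun ω => 1 - coherence (X u ω) (X v ω)) volume (-Real.pi) Real.pi := by
    intro u v
    rw [intervalIntegrable_iff]
    apply Integrable.mono' (g := fun _ => (1:ℝ))
    · refine (integrableOn_const_iff (C := (1:ℝ))).mpr (Or.inr ?_)
      rw [Set.uIoc_of_le (by linarith), Real.volume_Ioc]
      exact ENNReal.ofReal_lt_top
    · exact (measurable_const.sub (hmeas u v)).aestronglyMeasurable
    · refine Filter.Eventually.of_forall (fun ω => ?_)
      rw [Real.norm_eq_abs, abs_le]
      constructor
      · have := coherence_le_one (X u ω) (X v ω)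
        linarith
      · have := coherence_nonneg (X u ω) (X v ω)
        linarith
  have hpw : ∀ ω : ℝ, coherence (X x ω) (X y ω) < coherence (X a ω) (X (par a) ω) :=
    fun ω => D.coherence_lt_edge ω ha hax hay hstrict
  have hIg_nonneg : 0 ≤ ∫ ω in (-Real.pi)..Real.pi,
      (1 - coherence (X a ω) (X (par a) ω)) := by
    apply intervalIntegral.integral_nonneg (by linarith)
    intro u _
    have := coherence_le_one (X a u) (X (par a) u)
    linarith
  have hsub : IntervalIntegrable
      (fun ω => (1 - coherence (X x ω) (X y ω)) -
        (1 - coherence (X a ω) (X (par a) ω))) volume (-Real.pi) Real.pi :=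
    (hint x y).sub (hint a (par a))
  have hpos : 0 < ∫ ω in (-Real.pi)..Real.pi,
      ((1 - coherence (X x ω) (X y ω)) - (1 - coherence (X a ω) (X (par a) ω))) := by
    apply intervalIntegral_pos_of_pos_on hsub
    · intro u _
      have := hpw u
      linarith
    · linarith
  rw [intervalIntegral.integral_sub (hint x y) (hint a (par a))] at hpos
  unfold cohDist
  apply Real.sqrt_lt_sqrt
  · apply mul_nonneg (by positivity) hIg_nonneg
  · apply mul_lt_mul_of_pos_left _ (by positivity)
    linarith

end LCMTData

end LCMT

/-! ### The graph of a parent map -/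

section TreeOfPar

open SimpleGraph

variable {V : Type*} {r : V} {par : V → V}

lemma TG_adj_par (hpar : ∀ j, j ≠ r → par j ≠ j) {v : V} (hv : v ≠ r) :
    (fromRel fun a b : V => par a = b).Adj v (par v) := by
  rw [fromRel_adj]
  exact ⟨Ne.symm (hpar v hv), Or.inl rfl⟩

lemma TG_connected (hroot : par r = r) (hpar : ∀ j, j ≠ r → par j ≠ j)
    (hreach : ∀ j, ∃ n, par^[n] j = r) :
    (fromRel fun a b : V => par a = b).Connected := by
  have hr : ∀ v, (fromRel fun a b : V => par a = b).Reachable v r := by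
    refine par_induction hroot hreach (Reachable.refl r) ?_
    intro v hv ih
    exact (TG_adj_par hpar hv).reachable.trans ih
  rw [connected_iff]
  exact ⟨fun u v => (hr u).trans (hr v).symm, ⟨r⟩⟩

lemma TG_edge_ne (hroot : par r = r) (hreach : ∀ j, ∃ n, par^[n] j = r)
    {a v : V} (ha : a ≠ r) (hva : v ≠ a) :
    s(v, par v) ≠ s(a, par a) := by
  intro hEq
  rw [Sym2.eq_iff] at hEq
  rcases hEq with ⟨h1, _⟩ | ⟨h1, h2⟩
  · exact hva h1
  · -- v = par a and par v = a, so par (par a) = a, forcing a = r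
    apply ha
    refine eq_root_of_iterate_fixed hroot hreach (two_ne_zero) ?_
    show par^[2] a = a
    rw [show (2:ℕ) = 1 + 1 from rfl, Function.iterate_add_apply]
    simp only [Function.iterate_one]
    rw [← h1, h2]

lemma TG_anc_invariant (hroot : par r = r) (hpar : ∀ j, j ≠ r → par j ≠ j)
    (hreach : ∀ j, ∃ n, par^[n] j = r) {a : V} (ha : a ≠ r) {p q : V}
    (hr : (((fromRel fun a b : V => par a = b)).deleteEdges {s(a, par a)}).Reachable p q) :
    a ∈ Anc par p ↔ a ∈ Anc par q := by
  have hstep : ∀ {c d : V},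
      (((fromRel fun a b : V => par a = b)).deleteEdges {s(a, par a)}).Adj c d →
      (a ∈ Anc par c ↔ a ∈ Anc par d) := by
    intro c d hcd
    rw [deleteEdges_adj] at hcd
    obtain ⟨hadj, hnd⟩ := hcd
    rw [fromRel_adj] at hadj
    obtain ⟨hnecd, hor⟩ := hadj
    have key : ∀ {u v : V}, par u = v → s(u,v) ≠ s(a, par a) →
        (a ∈ Anc par u ↔ a ∈ Anc par v) := by
      intro u v hpv hnev
      subst hpv
      constructor
      · intro hau
        rcases anc_cases.mp hau with rfl | hh
        · exact absurd rfl hnev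
        · exact hh
      · intro hav
        exact anc_step hav
    rcases hor with hc | hd
    · exact key hc (by simpa using hnd)
    · refine (key hd ?_).symm
      rw [Sym2.eq_swap]
      simpa using hnd
  rw [reachable_iff_reflTransGen] at hr
  induction hr with
  | refl => exact Iff.rfl
  | tail _ hbc ih => exact ih.trans (hstep hbc)

lemma TG_acyclic (hroot : par r = r) (hpar : ∀ j, j ≠ r → par j ≠ j)
    (hreach : ∀ j, ∃ n, par^[n] j = r) :
    (fromRel fun a b : V => par a = b).IsAcyclic := by
  rw [isAcyclic_iff_forall_adj_isBridge]
  intro u v huv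
  have hadj := huv
  rw [fromRel_adj] at hadj
  obtain ⟨hne, hor⟩ := hadj
  rw [isBridge_iff]
  skip
  intro hreachuv
  rcases hor with hc | hd
  · have hur : u ≠ r := by
      rintro rfl
      rw [hroot] at hc
      exact hne hc
    subst hc
    have hinv := TG_anc_invariant hroot hpar hreach hur (p := u) (q := par u) hreachuv
    exact not_anc_par_self hroot hreach hur (hinv.mp (anc_self par u))
  · have hvr : v ≠ r := by
      rintro rfl
      rw [hroot] at hd
      exact hne hd.symm
    subst hd
    rw [show s(par v, v) = s(v, par v) from Sym2.eq_swap] at hreachuv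
    have hinv := TG_anc_invariant hroot hpar hreach hvr (p := v) (q := par v)
      hreachuv.symm
    exact not_anc_par_self hroot hreach hvr (hinv.mp (anc_self par v))

lemma TG_sep (hroot : par r = r) (hpar : ∀ j, j ≠ r → par j ≠ j)
    (hreach : ∀ j, ∃ n, par^[n] j = r) {a x y : V} (ha : a ≠ r)
    (hnr : ¬ (((fromRel fun a b : V => par a = b)).deleteEdges
      {s(a, par a)}).Reachable x y) :
    (a ∈ Anc par x ∧ a ∉ Anc par y) ∨ (a ∈ Anc par y ∧ a ∉ Anc par x) := by
  set G := ((fromRel fun a b : V => par a = b)).deleteEdges {s(a, par a)} with hG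
  have hra : ∀ v, a ∈ Anc par v → G.Reachable v a := by
    refine par_induction hroot hreach ?_ ?_
    · intro hmem
      exact absurd (anc_root hroot hmem) ha
    · intro v hv ih hmem
      by_cases hva : v = a
      · exact hva ▸ Reachable.refl v
      · have hmem' : a ∈ Anc par (par v) := anc_of_ne hmem (Ne.symm hva)
        have hedge : G.Adj v (par v) := by
          rw [hG, deleteEdges_adj]
          refine ⟨TG_adj_par hpar hv, ?_⟩
          simpa using TG_edge_ne hroot hreach ha hva
        exact hedge.reachable.trans (ih hmem')
  have hrr : ∀ v, a ∉ Anc par v → G.Reachable v r := by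
    refine par_induction hroot hreach ?_ ?_
    · intro _
      exact Reachable.refl r
    · intro v hv ih hnot
      have hnot' : a ∉ Anc par (par v) := fun hmem => hnot (anc_step hmem)
      have hva : v ≠ a := fun hEq => hnot (hEq ▸ anc_self par v)
      have hedge : G.Adj v (par v) := by
        rw [hG, deleteEdges_adj]
        refine ⟨TG_adj_par hpar hv, ?_⟩
        simpa using TG_edge_ne hroot hreach ha hva
      exact hedge.reachable.trans (ih hnot')
  by_cases hx : a ∈ Anc par x <;> by_cases hy : a ∈ Anc par y
  · exact absurd ((hra x hx).trans (hra y hy).symm) hnr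
  · exact Or.inl ⟨hx, hy⟩
  · exact Or.inr ⟨hy, hx⟩
  · exact absurd ((hrr x hx).trans (hrr y hy).symm) hnr

end TreeOfPar


end LCMTaux

/-- main theorem of the paper: the tree underlying a well-posed
LCMT whose transfer functions never vanish is recovered exactly as the unique
minimum spanning tree of the coherence-based distances among its signals: every
other tree on the node set has strictly larger total coherence distance. -/
theorem lcmt_unique_minimum_spanning_tree
    {H : Type*} [NormedAddCommGroup H] [InnerProductSpace ℂ H]
    {V : Type*} [Fintype V]
    (r : V) (par : V → V)
    (hroot : par r = r)
    (hpar : ∀ j, j ≠ r → par j ≠ j)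
    (hreach : ∀ j, ∃ n, par^[n] j = r)
    (h : V → ℝ → ℂ) (ρ : V → ℝ → H)
    (horth : ∀ (ω : ℝ) (a b : V), a ≠ b → ⟪ρ a ω, ρ b ω⟫_ℂ = 0)
    (hwp : ∀ (j : V) (ω : ℝ), ρ j ω ≠ 0)
    (X : V → ℝ → H)
    (hXr : ∀ ω, X r ω = ρ r ω)
    (hX : ∀ j, j ≠ r → ∀ ω, X j ω = h j ω • X (par j) ω + ρ j ω)
    (hnd : ∀ (m : V) (ω : ℝ), m ≠ r → h m ω ≠ 0)
    (hmeas : ∀ i j : V, Measurable fun ω => coherence (X i ω) (X j ω))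
    (T : SimpleGraph V) (hT : T = SimpleGraph.fromRel (fun a b => par a = b)) :
    ∀ T' : SimpleGraph V, T'.IsTree → T' ≠ T →
      graphWeight (fun a b => cohDist (X a) (X b))
          (fun a b => cohDist_symm (X a) (X b)) T <
      graphWeight (fun a b => cohDist (X a) (X b))
          (fun a b => cohDist_symm (X a) (X b)) T' := by
  subst hT
  have D : LCMTaux.LCMTData r par h ρ X :=
    ⟨hroot, hreach, horth, hwp, hXr, hX, hnd⟩
  have Hcore : ∀ x y c : V, x ≠ y → c ≠ r → s(x,y) ≠ s(c, par c) →
      ¬ ((SimpleGraph.fromRel fun a b : V => par a = b).deleteEdges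
        {s(c, par c)}).Reachable x y →
      cohDist (X c) (X (par c)) < cohDist (X x) (X y) := by
    intro x y c hxy hc hne hnreach
    rcases LCMTaux.TG_sep hroot hpar hreach hc hnreach with ⟨hax, hay⟩ | ⟨hay, hax⟩
    · refine D.cohDist_edge_lt hmeas hc hax hay ?_
      by_contra hcon
      push_neg at hcon
      obtain ⟨h1, h2⟩ := hcon
      exact hne (by rw [h1, h2])
    · rw [cohDist_symm (X x) (X y)]
      refine D.cohDist_edge_lt hmeas hc hay hax ?_
      by_contra hcon
      push_neg at hcon
      obtain ⟨h1, h2⟩ := hcon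
      refine hne ?_
      rw [h1, h2, Sym2.eq_swap]
  refine LCMTaux.tree_unique_mst _ _ _
    ⟨LCMTaux.TG_connected hroot hpar hreach, LCMTaux.TG_acyclic hroot hpar hreach⟩ ?_
  intro x y a b hxy hadj hne hnreach
  rw [SimpleGraph.fromRel_adj] at hadj
  obtain ⟨hab, hor⟩ := hadj
  rcases hor with hpa | hpb
  · have har : a ≠ r := by
      rintro rfl
      exact hab (hroot.symm.trans hpa)
    subst hpa
    exact Hcore x y a hxy har hne hnreach
  · have hbr : b ≠ r := by
      rintro rfl
      exact hab (hroot.symm.trans hpb).symm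
    subst hpb
    rw [show s(par b, b) = s(b, par b) from Sym2.eq_swap] at hne hnreach
    rw [cohDist_symm (X (par b)) (X b)]
    exact Hcore x y b hxy hbr hne hnreach
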